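/- arXiv:1603.03198 — 3 statements merged into one kernel-verified Lean document; each statement's English description precedes it below -/
import Mathlib

section
/- Let 0 < T̄, let f₀ : [0,T̄] → ℝ be Lebesgue-integrable, and let a : [0,T̄] × [0,T̄] → ℝ be measurable with a(s,u) = 0 whenever u < s and ∫_0^T̄ ∫_0^T̄ |a(s,u)| ds du < ∞. Define f(t,u) := f₀(u) + ∫_0^t a(s,u) ds. Then for all 0 ≤ t ≤ T ≤ T̄: ∫_t^T f(t,u) du = ∫_0^T f₀(u) du − ∫_0^t f(s,s) ds + ∫_0^t (∫_s^T a(s,u) du) ds, where s ↦ f(s,s) = f₀(s) + ∫_0^s a(v,s) dv is Lebesgue-integrable on [0,t]. -/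
open MeasureTheory

/-- deterministic HJM reparametrization. With forward rate
`f(t,u) = f₀(u) + ∫_0^t a(s,u) ds`, where `a(s,u) = 0` for `u < s` and `a` is integrable
on the square, one has for `0 ≤ t ≤ T ≤ T̄` that `s ↦ f(s,s)` is integrable on `[0,t]` and
`∫_t^T f(t,u) du = ∫_0^T f₀(u) du − ∫_0^t f(s,s) ds + ∫_0^t (∫_s^T a(s,u) du) ds`. -/
theorem stmt3 (Tb : ℝ) (hTb : 0 < Tb) (f₀ : ℝ → ℝ) (a : ℝ → ℝ → ℝ)
    (hf₀ : IntegrableOn f₀ (Set.Icc (0 : ℝ) Tb))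
    (ha_meas : Measurable (Function.uncurry a))
    (ha_zero : ∀ s u : ℝ, u < s → a s u = 0)
    (ha_int : IntegrableOn (Function.uncurry a) (Set.Icc 0 Tb ×ˢ Set.Icc 0 Tb)) :
    ∀ t T : ℝ, 0 ≤ t → t ≤ T → T ≤ Tb →
      IntegrableOn (fun s => f₀ s + ∫ v in (0 : ℝ)..s, a v s) (Set.Icc (0 : ℝ) t) ∧
      (∫ u in t..T, (f₀ u + ∫ s in (0 : ℝ)..t, a s u))
        = (∫ u in (0 : ℝ)..T, f₀ u)
          - (∫ s in (0 : ℝ)..t, (f₀ s + ∫ v in (0 : ℝ)..s, a v s))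
          + ∫ s in (0 : ℝ)..t, ∫ u in s..T, a s u := by
  intro t T ht htT hTTb
  have h0T : (0 : ℝ) ≤ T := ht.trans htT
  have htTb : t ≤ Tb := htT.trans hTTb
  -- subset facts
  have hsub : ∀ {x : ℝ}, x ≤ Tb → Set.Ioc (0 : ℝ) x ⊆ Set.Icc (0 : ℝ) Tb := by
    intro x hx y hy
    exact ⟨le_of_lt hy.1, hy.2.trans hx⟩
  -- integrability of a on rectangles (as product of restricted measures)
  have hrect : ∀ {x y : ℝ}, x ≤ Tb → y ≤ Tb →
      Integrable (Function.uncurry a)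
        ((volume.restrict (Set.Ioc (0 : ℝ) x)).prod (volume.restrict (Set.Ioc (0 : ℝ) y))) := by
    intro x y hx hy
    rw [Measure.prod_restrict]
    exact ha_int.mono_set (Set.prod_mono (hsub hx) (hsub hy))
  -- the key function g
  set g : ℝ → ℝ := fun u => ∫ s in Set.Ioc (0 : ℝ) t, a s u with hg_def
  have hg_T : IntegrableOn g (Set.Ioc (0 : ℝ) T) :=
    (hrect htTb hTTb).integral_prod_right
  have hg_t : IntegrableOn g (Set.Ioc (0 : ℝ) t) :=
    hg_T.mono_set (Set.Ioc_subset_Ioc le_rfl htT)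
  have hg_tT : IntegrableOn g (Set.Ioc t T) :=
    hg_T.mono_set (Set.Ioc_subset_Ioc ht le_rfl)
  -- pointwise claim 1: diagonal integral
  have claim1 : ∀ s ∈ Set.Icc (0 : ℝ) t, (∫ v in (0 : ℝ)..s, a v s) = g s := by
    intro s hs
    rw [intervalIntegral.integral_of_le hs.1, hg_def]
    have hind : ∀ v : ℝ, a v s = (Set.Iic s).indicator (fun v => a v s) v := by
      intro v
      by_cases hv : v ∈ Set.Iic s
      · rw [Set.indicator_of_mem hv]
      · rw [Set.indicator_of_notMem hv, ha_zero v s (lt_of_not_ge hv)]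
    calc (∫ v in Set.Ioc (0 : ℝ) s, a v s)
        = ∫ v in Set.Ioc (0 : ℝ) t ∩ Set.Iic s, a v s := by
          rw [Set.Ioc_inter_Iic, min_eq_right hs.2]
      _ = ∫ v in Set.Ioc (0 : ℝ) t, (Set.Iic s).indicator (fun v => a v s) v := by
          rw [setIntegral_indicator measurableSet_Iic]
      _ = ∫ v in Set.Ioc (0 : ℝ) t, a v s := by
          exact setIntegral_congr_fun measurableSet_Ioc fun v _ => (hind v).symm
  -- pointwise claim 2
  have claim2 : ∀ s ∈ Set.Ioc (0 : ℝ) t,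
      (∫ u in s..T, a s u) = ∫ u in Set.Ioc (0 : ℝ) T, a s u := by
    intro s hs
    rw [intervalIntegral.integral_of_le (hs.2.trans htT)]
    have hind : ∀ u : ℝ, a s u = (Set.Ici s).indicator (fun u => a s u) u := by
      intro u
      by_cases hu : u ∈ Set.Ici s
      · rw [Set.indicator_of_mem hu]
      · rw [Set.indicator_of_notMem hu, ha_zero s u (lt_of_not_ge hu)]
    have hset : Set.Ioc (0 : ℝ) T ∩ Set.Ici s = Set.Icc s T := by
      ext u
      constructor
      · rintro ⟨⟨_, hu2⟩, hu3⟩; exact ⟨hu3, hu2⟩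
      · rintro ⟨hu1, hu2⟩; exact ⟨⟨lt_of_lt_of_le hs.1 hu1, hu2⟩, hu1⟩
    calc (∫ u in Set.Ioc s T, a s u)
        = ∫ u in Set.Icc s T, a s u := (integral_Icc_eq_integral_Ioc).symm
      _ = ∫ u in Set.Ioc (0 : ℝ) T ∩ Set.Ici s, a s u := by rw [hset]
      _ = ∫ u in Set.Ioc (0 : ℝ) T, (Set.Ici s).indicator (fun u => a s u) u := by
          rw [setIntegral_indicator measurableSet_Ici]
      _ = ∫ u in Set.Ioc (0 : ℝ) T, a s u := by
          exact setIntegral_congr_fun measurableSet_Ioc fun u _ => (hind u).symm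
  -- integrability part
  have hf₀t : IntegrableOn f₀ (Set.Icc (0 : ℝ) t) :=
    hf₀.mono_set (Set.Icc_subset_Icc le_rfl htTb)
  have hg_Icc : IntegrableOn g (Set.Icc (0 : ℝ) t) :=
    (integrableOn_Icc_iff_integrableOn_Ioc).2 hg_t
  have hdiag : IntegrableOn (fun s => f₀ s + ∫ v in (0 : ℝ)..s, a v s) (Set.Icc (0 : ℝ) t) := by
    have hsum : IntegrableOn (fun s => f₀ s + g s) (Set.Icc (0 : ℝ) t) := hf₀t.add hg_Icc
    refine hsum.congr_fun ?_ measurableSet_Icc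
    intro s hs
    simp only [claim1 s hs]
  refine ⟨hdiag, ?_⟩
  -- convert all interval integrals to set integrals
  rw [intervalIntegral.integral_of_le htT, intervalIntegral.integral_of_le h0T,
    intervalIntegral.integral_of_le ht, intervalIntegral.integral_of_le ht]
  have hLHS : ∀ u : ℝ, (f₀ u + ∫ s in (0 : ℝ)..t, a s u) = f₀ u + g u := by
    intro u
    rw [intervalIntegral.integral_of_le ht]
  simp only [hLHS]
  -- split LHS
  have hf₀tT : IntegrableOn f₀ (Set.Ioc t T) :=
    hf₀.mono_set fun y hy => ⟨ht.trans (le_of_lt hy.1), hy.2.trans hTTb⟩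
  have hf₀Ioct : IntegrableOn f₀ (Set.Ioc (0 : ℝ) t) := hf₀.mono_set (hsub htTb)
  rw [integral_add hf₀tT hg_tT]
  -- rewrite the diagonal term
  have hdiag2 : (∫ s in Set.Ioc (0 : ℝ) t, (f₀ s + ∫ v in (0 : ℝ)..s, a v s))
      = (∫ s in Set.Ioc (0 : ℝ) t, f₀ s) + ∫ s in Set.Ioc (0 : ℝ) t, g s := by
    rw [← integral_add hf₀Ioct hg_t]
    exact setIntegral_congr_fun measurableSet_Ioc fun s hs => by
      rw [claim1 s ⟨le_of_lt hs.1, hs.2⟩]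
  rw [hdiag2]
  -- rewrite the last term using claim2 and Fubini
  have hlast : (∫ s in Set.Ioc (0 : ℝ) t, ∫ u in s..T, a s u)
      = (∫ s in Set.Ioc (0 : ℝ) t, g s) + ∫ u in Set.Ioc t T, g u := by
    have h1 : (∫ s in Set.Ioc (0 : ℝ) t, ∫ u in s..T, a s u)
        = ∫ s in Set.Ioc (0 : ℝ) t, ∫ u in Set.Ioc (0 : ℝ) T, a s u :=
      setIntegral_congr_fun measurableSet_Ioc fun s hs => claim2 s hs
    have h2 : (∫ s in Set.Ioc (0 : ℝ) t, ∫ u in Set.Ioc (0 : ℝ) T, a s u)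
        = ∫ u in Set.Ioc (0 : ℝ) T, g u :=
      integral_integral_swap (hrect htTb hTTb)
    have h3 : (∫ u in Set.Ioc (0 : ℝ) T, g u)
        = (∫ u in Set.Ioc (0 : ℝ) t, g u) + ∫ u in Set.Ioc t T, g u := by
      rw [← Set.Ioc_union_Ioc_eq_Ioc ht htT]
      exact setIntegral_union (Set.Ioc_disjoint_Ioc_of_le le_rfl) measurableSet_Ioc hg_t hg_tT
    rw [h1, h2, h3]
  rw [hlast]
  -- split ∫_{Ioc 0 T} f₀
  have hf₀T : (∫ u in Set.Ioc (0 : ℝ) T, f₀ u)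
      = (∫ u in Set.Ioc (0 : ℝ) t, f₀ u) + ∫ u in Set.Ioc t T, f₀ u := by
    rw [← Set.Ioc_union_Ioc_eq_Ioc ht htT]
    exact setIntegral_union (Set.Ioc_disjoint_Ioc_of_le le_rfl) measurableSet_Ioc hf₀Ioct hf₀tT
  rw [hf₀T]
  ring
end

section
/- Let T̄ > 0 and let μ be a finite Borel measure on [0,T̄] × [0,T̄] with μ({(s,u) : u ≤ s}) = 0. Let g₀ : [0,T̄] → ℝ and α : [0,T̄] × [0,T̄] → ℝ be measurable with α(v,u) = 0 whenever u < v, ∫_{[0,T̄]×[0,T̄]} |g₀(u)| dμ(s,u) < ∞ and ∫_{[0,T̄]×[0,T̄]} ∫_0^T̄ |α(v,u)| dv dμ(s,u) < ∞. Define g(t,u) := g₀(u) + ∫_0^t α(v,u) dv. Then for all 0 ≤ t ≤ T ≤ T̄: ∫_{[0,t]×(t,T]} g(t,u) dμ(s,u) = ∫_0^t ( ∫_{[0,v]×(v,T]} α(v,u) dμ(s,u) ) dv + ∫_{[0,t]×[0,T]} g(s,u) dμ(s,u) − ∫_{[0,T̄]×[0,t]} g(u,u) dμ(s,u). -/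
open MeasureTheory

/-- deterministic content of Lemma 4.1 of the paper. For a finite Borel
measure `μ` on the square `[0,T̄] × [0,T̄]` concentrated on `{(s,u) : s < u}` and the
forward rate `g(t,u) = g₀(u) + ∫_0^t α(v,u) dv` (with `α(v,u) = 0` for `u < v`), for all
`0 ≤ t ≤ T ≤ T̄`:
`∫_{[0,t]×(t,T]} g(t,u) dμ(s,u) = ∫_0^t (∫_{[0,v]×(v,T]} α(v,u) dμ(s,u)) dv
  + ∫_{[0,t]×[0,T]} g(s,u) dμ(s,u) − ∫_{[0,T̄]×[0,t]} g(u,u) dμ(s,u)`. -/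
theorem stmt5 (Tb : ℝ) (hTb : 0 < Tb) (μ : Measure (ℝ × ℝ)) [IsFiniteMeasure μ]
    (hsupp : μ ((Set.Icc 0 Tb ×ˢ Set.Icc 0 Tb)ᶜ) = 0)
    (hdiag : μ {p : ℝ × ℝ | p.2 ≤ p.1} = 0)
    (g₀ : ℝ → ℝ) (α : ℝ → ℝ → ℝ)
    (hg₀_meas : Measurable g₀) (hα_meas : Measurable (Function.uncurry α))
    (hα_zero : ∀ v u : ℝ, u < v → α v u = 0)
    (hg₀_int : (∫⁻ p in Set.Icc 0 Tb ×ˢ Set.Icc 0 Tb, ENNReal.ofReal |g₀ p.2| ∂μ) < ⊤)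
    (hα_int : (∫⁻ p in Set.Icc 0 Tb ×ˢ Set.Icc 0 Tb,
        (∫⁻ v in Set.Icc (0 : ℝ) Tb, ENNReal.ofReal |α v p.2|) ∂μ) < ⊤) :
    ∀ t T : ℝ, 0 ≤ t → t ≤ T → T ≤ Tb →
      (∫ p in Set.Icc 0 t ×ˢ Set.Ioc t T, (g₀ p.2 + ∫ v in (0 : ℝ)..t, α v p.2) ∂μ)
        = (∫ v in (0 : ℝ)..t, ∫ p in Set.Icc 0 v ×ˢ Set.Ioc v T, α v p.2 ∂μ)
          + (∫ p in Set.Icc 0 t ×ˢ Set.Icc 0 T,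
              (g₀ p.2 + ∫ v in (0 : ℝ)..p.1, α v p.2) ∂μ)
          - ∫ p in Set.Icc 0 Tb ×ˢ Set.Icc 0 t,
              (g₀ p.2 + ∫ v in (0 : ℝ)..p.2, α v p.2) ∂μ := by
  intro t T ht htT hTTb
  have htTb : t ≤ Tb := htT.trans hTTb
  have hT0 : 0 ≤ T := ht.trans htT
  set Q : Set (ℝ × ℝ) := Set.Icc 0 Tb ×ˢ Set.Icc 0 Tb with hQdef
  -- μ is carried by Q
  have hQae : ∀ᵐ p ∂μ, p ∈ Q := by
    rw [ae_iff]
    exact hsupp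
  have hμQ : μ.restrict Q = μ := Measure.restrict_eq_self_of_ae_mem hQae
  have hlt : ∀ᵐ p ∂μ, p.1 < p.2 := by
    rw [ae_iff]
    simpa [not_lt] using hdiag
  -- measurability of sections of α
  have hαm : ∀ u : ℝ, Measurable fun v => α v u := fun u =>
    hα_meas.comp (measurable_id.prodMk measurable_const)
  have hα2 : Measurable fun p : ℝ × ℝ => α p.2 p.1 :=
    hα_meas.comp (measurable_snd.prodMk measurable_fst)
  -- the dominating kernel
  set Hl : ℝ → ENNReal := fun u => ∫⁻ v in Set.Icc (0 : ℝ) Tb, ENNReal.ofReal |α v u| with hHl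
  have mHl : Measurable Hl := by
    apply Measurable.lintegral_prod_right (f := fun u v => ENNReal.ofReal |α v u|)
    exact hα2.abs.ennreal_ofReal
  have hα_int' : (∫⁻ p, Hl p.2 ∂μ) < ⊤ := by
    rw [← hμQ]; exact hα_int
  have hg₀_int' : (∫⁻ p, ENNReal.ofReal |g₀ p.2| ∂μ) < ⊤ := by
    rw [← hμQ]; exact hg₀_int
  have hfin : ∀ᵐ p ∂μ, Hl p.2 < ⊤ := ae_lt_top (mHl.comp measurable_snd) hα_int'.ne
  -- integrability of sections and basic bound
  have key : ∀ u : ℝ, Hl u < ⊤ → IntegrableOn (fun v => α v u) (Set.Icc 0 Tb) volume := by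
    intro u hu
    refine ⟨(hαm u).aestronglyMeasurable, ?_⟩
    rw [hasFiniteIntegral_iff_norm]
    simpa [Real.norm_eq_abs] using hu
  have keyb : ∀ u : ℝ, Hl u < ⊤ → ∀ f : ℝ → ℝ, Measurable f →
      (∀ v, |f v| ≤ |α v u|) → |∫ v in Set.Ioc (0 : ℝ) t, f v| ≤ (Hl u).toReal := by
    intro u hu f hfm hfb
    have hsub : Set.Ioc (0 : ℝ) t ⊆ Set.Icc (0 : ℝ) Tb :=
      Set.Ioc_subset_Icc_self.trans (Set.Icc_subset_Icc le_rfl htTb)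
    have hαint := key u hu
    have hαabs : IntegrableOn (fun v => |α v u|) (Set.Icc 0 Tb) volume := hαint.abs
    have hfint : IntegrableOn f (Set.Ioc (0 : ℝ) t) volume := by
      refine Integrable.mono' ((hαabs.mono_set hsub)) hfm.aestronglyMeasurable ?_
      exact Filter.Eventually.of_forall fun v => by simpa [Real.norm_eq_abs] using hfb v
    calc |∫ v in Set.Ioc (0 : ℝ) t, f v| ≤ ∫ v in Set.Ioc (0 : ℝ) t, |f v| := by
          simpa [Real.norm_eq_abs] using
            norm_integral_le_integral_norm (μ := volume.restrict (Set.Ioc (0:ℝ) t)) f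
      _ ≤ ∫ v in Set.Ioc (0 : ℝ) t, |α v u| := by
          refine integral_mono hfint.abs (hαabs.mono_set hsub) fun v => ?_
          simpa using hfb v
      _ ≤ ∫ v in Set.Icc (0 : ℝ) Tb, |α v u| := by
          refine setIntegral_mono_set hαabs ?_ (HasSubset.Subset.eventuallyLE hsub)
          exact Filter.Eventually.of_forall fun v => abs_nonneg _
      _ = (Hl u).toReal := by
          rw [integral_eq_lintegral_of_nonneg_ae (Filter.Eventually.of_forall fun v => abs_nonneg _)
            (hαm u).abs.aestronglyMeasurable]
  -- dominating function
  set W : ℝ × ℝ → ℝ := fun p => |g₀ p.2| + (Hl p.2).toReal with hWdef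
  have mW : Measurable W := ((hg₀_meas.comp measurable_snd).abs).add
    ((mHl.comp measurable_snd).ennreal_toReal)
  have hWint : Integrable W μ := by
    refine ⟨mW.aestronglyMeasurable, ?_⟩
    rw [hasFiniteIntegral_iff_norm]
    have hb : ∀ p : ℝ × ℝ, ENNReal.ofReal ‖W p‖ ≤ ENNReal.ofReal |g₀ p.2| + Hl p.2 := by
      intro p
      have h0 : ‖W p‖ = |g₀ p.2| + (Hl p.2).toReal := by
        rw [Real.norm_eq_abs, abs_of_nonneg (add_nonneg (abs_nonneg _) ENNReal.toReal_nonneg)]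
      rw [h0]
      exact le_trans ENNReal.ofReal_add_le
        (add_le_add_right ENNReal.ofReal_toReal_le _)
    calc (∫⁻ p, ENNReal.ofReal ‖W p‖ ∂μ)
        ≤ ∫⁻ p, (ENNReal.ofReal |g₀ p.2| + Hl p.2) ∂μ := lintegral_mono hb
      _ = (∫⁻ p, ENNReal.ofReal |g₀ p.2| ∂μ) + ∫⁻ p, Hl p.2 ∂μ :=
          lintegral_add_left ((hg₀_meas.comp measurable_snd).abs.ennreal_ofReal) _
      _ < ⊤ := ENNReal.add_lt_top.2 ⟨hg₀_int', hα_int'⟩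
  -- the measurable integrands
  set F : ℝ × ℝ → ℝ → ℝ := fun p v => if p.1 < v then α v p.2 else 0 with hFdef
  set F' : ℝ × ℝ → ℝ → ℝ := fun p v => if v ≤ p.1 then α v p.2 else 0 with hF'def
  set F'' : ℝ × ℝ → ℝ → ℝ := fun p v => if v ≤ p.2 then α v p.2 else 0 with hF''def
  have hαpv : Measurable fun q : (ℝ × ℝ) × ℝ => α q.2 q.1.2 :=
    hα_meas.comp (measurable_snd.prodMk measurable_fst.snd)
  have mF : Measurable (Function.uncurry F) := by
    refine Measurable.ite ?_ hαpv measurable_const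
    exact measurableSet_lt measurable_fst.fst measurable_snd
  have mF' : Measurable (Function.uncurry F') := by
    refine Measurable.ite ?_ hαpv measurable_const
    exact measurableSet_le measurable_snd measurable_fst.fst
  have mF'' : Measurable (Function.uncurry F'') := by
    refine Measurable.ite ?_ hαpv measurable_const
    exact measurableSet_le measurable_snd measurable_fst.snd
  set h : ℝ × ℝ → ℝ := fun p => ∫ v in Set.Ioc (0 : ℝ) t, F p v with hhdef
  set g2 : ℝ × ℝ → ℝ := fun p => ∫ v in Set.Ioc (0 : ℝ) t, F' p v with hg2def
  set g4 : ℝ × ℝ → ℝ := fun p => ∫ v in Set.Ioc (0 : ℝ) t, F'' p v with hg4def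
  have mh : StronglyMeasurable h := mF.stronglyMeasurable.integral_prod_right
  have mg2 : StronglyMeasurable g2 := mF'.stronglyMeasurable.integral_prod_right
  have mg4 : StronglyMeasurable g4 := mF''.stronglyMeasurable.integral_prod_right
  -- pointwise evaluation of g2, g4, h as set integrals
  have hg2eq : ∀ p : ℝ × ℝ, p.1 ∈ Set.Icc 0 t → g2 p = ∫ v in Set.Ioc 0 p.1, α v p.2 := by
    intro p hp
    have : (fun v => F' p v) = Set.indicator (Set.Iic p.1) fun v => α v p.2 := by
      funext v
      simp only [hF'def, Set.indicator_apply, Set.mem_Iic]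
    rw [hg2def]
    simp only [this]
    rw [setIntegral_indicator measurableSet_Iic, Set.Ioc_inter_Iic, min_eq_right hp.2]
  have hg4eq : ∀ p : ℝ × ℝ, p.2 ∈ Set.Icc 0 t → g4 p = ∫ v in Set.Ioc 0 p.2, α v p.2 := by
    intro p hp
    have : (fun v => F'' p v) = Set.indicator (Set.Iic p.2) fun v => α v p.2 := by
      funext v
      simp only [hF''def, Set.indicator_apply, Set.mem_Iic]
    rw [hg4def]
    simp only [this]
    rw [setIntegral_indicator measurableSet_Iic, Set.Ioc_inter_Iic, min_eq_right hp.2]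
  have hheq : ∀ p : ℝ × ℝ, p.1 ∈ Set.Icc 0 t → h p = ∫ v in Set.Ioc p.1 t, α v p.2 := by
    intro p hp
    have : (fun v => F p v) = Set.indicator (Set.Ioi p.1) fun v => α v p.2 := by
      funext v
      simp only [hFdef, Set.indicator_apply, Set.mem_Ioi]
    rw [hhdef]
    simp only [this]
    rw [setIntegral_indicator measurableSet_Ioi, Set.Ioc_inter_Ioi, max_eq_right hp.1]
  -- decomposition relations
  have r1 : ∀ p : ℝ × ℝ, p.1 ∈ Set.Icc 0 t → Hl p.2 < ⊤ →
      (∫ v in Set.Ioc (0 : ℝ) t, α v p.2) = g2 p + h p := by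
    intro p hp hfp
    rw [hg2eq p hp, hheq p hp, ← setIntegral_union (Set.Ioc_disjoint_Ioc_of_le le_rfl) measurableSet_Ioc
      (((key p.2 hfp).mono_set (Set.Ioc_subset_Icc_self.trans (Set.Icc_subset_Icc le_rfl (hp.2.trans htTb)))))
      (((key p.2 hfp).mono_set (Set.Ioc_subset_Icc_self.trans (Set.Icc_subset_Icc hp.1 htTb)))),
      Set.Ioc_union_Ioc_eq_Ioc hp.1 hp.2]
  have r2 : ∀ p : ℝ × ℝ, p ∈ Set.Icc 0 t ×ˢ Set.Icc 0 t → p.1 < p.2 → Hl p.2 < ⊤ →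
      g4 p = g2 p + h p := by
    intro p hp hplt hfp
    have hp1 : p.1 ∈ Set.Icc 0 t := hp.1
    have hp2 : p.2 ∈ Set.Icc 0 t := hp.2
    have hsub1 : Set.Ioc (0 : ℝ) p.1 ⊆ Set.Icc 0 Tb :=
      Set.Ioc_subset_Icc_self.trans (Set.Icc_subset_Icc le_rfl (hp1.2.trans htTb))
    have hsub2 : Set.Ioc p.1 p.2 ⊆ Set.Icc 0 Tb :=
      Set.Ioc_subset_Icc_self.trans (Set.Icc_subset_Icc hp1.1 (hp2.2.trans htTb))
    have hsub3 : Set.Ioc p.2 t ⊆ Set.Icc 0 Tb :=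
      Set.Ioc_subset_Icc_self.trans (Set.Icc_subset_Icc hp2.1 htTb)
    have e4 : g4 p = (∫ v in Set.Ioc (0 : ℝ) p.1, α v p.2) + ∫ v in Set.Ioc p.1 p.2, α v p.2 := by
      rw [hg4eq p hp2, ← setIntegral_union (Set.Ioc_disjoint_Ioc_of_le le_rfl) measurableSet_Ioc
        ((key p.2 hfp).mono_set hsub1) ((key p.2 hfp).mono_set hsub2),
        Set.Ioc_union_Ioc_eq_Ioc hp1.1 hplt.le]
    have e0 : (∫ v in Set.Ioc p.2 t, α v p.2) = 0 := by
      rw [setIntegral_congr_fun measurableSet_Ioc (fun v hv => hα_zero v p.2 hv.1)]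
      exact integral_zero _ _
    have eh : h p = (∫ v in Set.Ioc p.1 p.2, α v p.2) := by
      rw [hheq p hp1, ← Set.Ioc_union_Ioc_eq_Ioc hplt.le hp2.2,
        setIntegral_union (Set.Ioc_disjoint_Ioc_of_le le_rfl) measurableSet_Ioc
          ((key p.2 hfp).mono_set hsub2) ((key p.2 hfp).mono_set hsub3), e0, add_zero]
    rw [e4, eh, hg2eq p hp1]
  -- integrability of all integrands on arbitrary sets
  set g3 : ℝ × ℝ → ℝ := fun p => ∫ v in Set.Ioc (0 : ℝ) t, α v p.2 with hg3def
  have mg3 : StronglyMeasurable g3 := by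
    have h0 : StronglyMeasurable (Function.uncurry fun (p : ℝ × ℝ) (v : ℝ) => α v p.2) :=
      hαpv.stronglyMeasurable
    exact h0.integral_prod_right
  have habs_h : ∀ᵐ p ∂μ, ‖h p‖ ≤ W p := by
    filter_upwards [hfin] with p hfp
    have hb : ∀ v, |F p v| ≤ |α v p.2| := by
      intro v
      simp only [hFdef]
      split_ifs <;> simp [abs_nonneg]
    have := keyb p.2 hfp (F p) (mF.comp (measurable_prodMk_left)) hb
    rw [Real.norm_eq_abs]
    calc |h p| ≤ (Hl p.2).toReal := this
      _ ≤ W p := le_add_of_nonneg_left (abs_nonneg _)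
  have habs_g2 : ∀ᵐ p ∂μ, ‖g₀ p.2 + g2 p‖ ≤ W p := by
    filter_upwards [hfin] with p hfp
    have hb : ∀ v, |F' p v| ≤ |α v p.2| := by
      intro v
      simp only [hF'def]
      split_ifs <;> simp [abs_nonneg]
    have h2 := keyb p.2 hfp (F' p) (mF'.comp (measurable_prodMk_left)) hb
    calc ‖g₀ p.2 + g2 p‖ ≤ |g₀ p.2| + |g2 p| := abs_add_le _ _
      _ ≤ |g₀ p.2| + (Hl p.2).toReal := add_le_add_right h2 _
  have habs_g3 : ∀ᵐ p ∂μ, ‖g₀ p.2 + g3 p‖ ≤ W p := by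
    filter_upwards [hfin] with p hfp
    have h2 := keyb p.2 hfp (fun v => α v p.2) (hαm p.2) (fun v => le_rfl)
    calc ‖g₀ p.2 + g3 p‖ ≤ |g₀ p.2| + |g3 p| := abs_add_le _ _
      _ ≤ |g₀ p.2| + (Hl p.2).toReal := add_le_add_right h2 _
  have habs_g4 : ∀ᵐ p ∂μ, ‖g₀ p.2 + g4 p‖ ≤ W p := by
    filter_upwards [hfin] with p hfp
    have hb : ∀ v, |F'' p v| ≤ |α v p.2| := by
      intro v
      simp only [hF''def]
      split_ifs <;> simp [abs_nonneg]
    have h2 := keyb p.2 hfp (F'' p) (mF''.comp (measurable_prodMk_left)) hb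
    calc ‖g₀ p.2 + g4 p‖ ≤ |g₀ p.2| + |g4 p| := abs_add_le _ _
      _ ≤ |g₀ p.2| + (Hl p.2).toReal := add_le_add_right h2 _
  have mg0 : Measurable fun p : ℝ × ℝ => g₀ p.2 := hg₀_meas.comp measurable_snd
  have int_h : ∀ S : Set (ℝ × ℝ), Integrable h (μ.restrict S) := fun S =>
    (hWint.restrict).mono' mh.aestronglyMeasurable (ae_restrict_of_ae habs_h)
  have int_g2 : ∀ S : Set (ℝ × ℝ), Integrable (fun p => g₀ p.2 + g2 p) (μ.restrict S) := fun S =>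
    (hWint.restrict).mono' (mg0.add mg2.measurable).aestronglyMeasurable
      (ae_restrict_of_ae habs_g2)
  have int_g3 : ∀ S : Set (ℝ × ℝ), Integrable (fun p => g₀ p.2 + g3 p) (μ.restrict S) := fun S =>
    (hWint.restrict).mono' (mg0.add mg3.measurable).aestronglyMeasurable
      (ae_restrict_of_ae habs_g3)
  have int_g4 : ∀ S : Set (ℝ × ℝ), Integrable (fun p => g₀ p.2 + g4 p) (μ.restrict S) := fun S =>
    (hWint.restrict).mono' (mg0.add mg4.measurable).aestronglyMeasurable
      (ae_restrict_of_ae habs_g4)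
  -- the sets
  set A : Set (ℝ × ℝ) := Set.Icc 0 t ×ˢ Set.Ioc t T with hAdef
  set K : Set (ℝ × ℝ) := Set.Icc 0 t ×ˢ Set.Icc 0 t with hKdef
  set B : Set (ℝ × ℝ) := Set.Icc 0 t ×ˢ Set.Icc 0 T with hBdef
  set S4 : Set (ℝ × ℝ) := Set.Icc 0 Tb ×ˢ Set.Icc 0 t with hS4def
  have hAm : MeasurableSet A := measurableSet_Icc.prod measurableSet_Ioc
  have hKm : MeasurableSet K := measurableSet_Icc.prod measurableSet_Icc
  have hBm : MeasurableSet B := measurableSet_Icc.prod measurableSet_Icc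
  have hS4m : MeasurableSet S4 := measurableSet_Icc.prod measurableSet_Icc
  have eI1 : (∫ p in A, (g₀ p.2 + ∫ v in Set.Ioc (0 : ℝ) t, α v p.2) ∂μ)
      = (∫ p in A, (g₀ p.2 + g2 p) ∂μ) + ∫ p in A, h p ∂μ := by
    rw [← integral_add (int_g2 A) (int_h A)]
    refine setIntegral_congr_ae hAm ?_
    filter_upwards [hfin] with p hfp hpA
    rw [r1 p hpA.1 hfp]
    ring
  have eI3a : (∫ p in B, (g₀ p.2 + ∫ v in (0 : ℝ)..p.1, α v p.2) ∂μ)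
      = ∫ p in B, (g₀ p.2 + g2 p) ∂μ := by
    refine setIntegral_congr_fun hBm fun p hp => ?_
    rw [hg2eq p hp.1, intervalIntegral.integral_of_le hp.1.1]
  have eI4a : (∫ p in S4, (g₀ p.2 + ∫ v in (0 : ℝ)..p.2, α v p.2) ∂μ)
      = ∫ p in S4, (g₀ p.2 + g4 p) ∂μ := by
    refine setIntegral_congr_fun hS4m fun p hp => ?_
    rw [hg4eq p hp.2, intervalIntegral.integral_of_le hp.2.1]
  have eI4b : μ.restrict S4 = μ.restrict K := by
    refine Measure.restrict_congr_set ?_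
    rw [Filter.eventuallyEq_set]
    filter_upwards [hlt] with p hplt
    constructor
    · intro hp
      exact ⟨⟨hp.1.1, le_of_lt (lt_of_lt_of_le hplt hp.2.2)⟩, hp.2⟩
    · intro hp
      exact ⟨⟨hp.1.1, hp.1.2.trans htTb⟩, hp.2⟩
  have eI4c : (∫ p in K, (g₀ p.2 + g4 p) ∂μ)
      = (∫ p in K, (g₀ p.2 + g2 p) ∂μ) + ∫ p in K, h p ∂μ := by
    rw [← integral_add (int_g2 K) (int_h K)]
    refine setIntegral_congr_ae hKm ?_
    filter_upwards [hfin, hlt] with p hfp hplt hpK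
    rw [r2 p hpK hplt hfp]
    ring
  have eB : B = K ∪ A := by
    rw [hKdef, hAdef, hBdef, ← Set.prod_union, Set.Icc_union_Ioc_eq_Icc ht htT]
  have hdisj : Disjoint K A :=
    Set.disjoint_left.2 fun p hK hA => absurd hA.2.1 (not_lt.mpr hK.2.2)
  have eI3b : (∫ p in B, (g₀ p.2 + g2 p) ∂μ)
      = (∫ p in K, (g₀ p.2 + g2 p) ∂μ) + ∫ p in A, (g₀ p.2 + g2 p) ∂μ := by
    rw [eB, setIntegral_union hdisj hAm (int_g2 K) (int_g2 A)]
  have eBh : (∫ p in B, h p ∂μ)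
      = (∫ p in K, h p ∂μ) + ∫ p in A, h p ∂μ := by
    rw [eB, setIntegral_union hdisj hAm (int_h K) (int_h A)]
  -- Fubini
  have hsubIoc : Set.Ioc (0 : ℝ) t ⊆ Set.Icc (0 : ℝ) Tb :=
    Set.Ioc_subset_Icc_self.trans (Set.Icc_subset_Icc le_rfl htTb)
  have hIntF : Integrable (Function.uncurry F)
      ((μ.restrict B).prod (volume.restrict (Set.Ioc (0 : ℝ) t))) := by
    refine ⟨mF.aestronglyMeasurable, ?_⟩
    rw [hasFiniteIntegral_iff_norm, lintegral_prod _ (mF.norm.ennreal_ofReal).aemeasurable]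
    calc (∫⁻ p, (∫⁻ v in Set.Ioc (0 : ℝ) t, ENNReal.ofReal ‖F p v‖) ∂μ.restrict B)
        ≤ ∫⁻ p, Hl p.2 ∂μ.restrict B := by
          refine lintegral_mono fun p => ?_
          calc (∫⁻ v in Set.Ioc (0 : ℝ) t, ENNReal.ofReal ‖F p v‖)
              ≤ ∫⁻ v in Set.Ioc (0 : ℝ) t, ENNReal.ofReal |α v p.2| := by
                refine lintegral_mono fun v => ENNReal.ofReal_le_ofReal ?_
                rw [Real.norm_eq_abs]
                simp only [hFdef]
                split_ifs <;> simp [abs_nonneg]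
            _ ≤ Hl p.2 := lintegral_mono_set hsubIoc
      _ ≤ ∫⁻ p, Hl p.2 ∂μ := lintegral_mono' Measure.restrict_le_self le_rfl
      _ < ⊤ := hα_int'
  have hswap : (∫ p in B, h p ∂μ)
      = ∫ v in Set.Ioc (0 : ℝ) t, (∫ p in B, F p v ∂μ) := by
    exact integral_integral_swap hIntF
  -- countability of atoms
  have hcnt : ∀ π : ℝ × ℝ → ℝ, Measurable π → ∀ᵐ v : ℝ ∂volume, μ (π ⁻¹' {v}) = 0 := by
    intro π hπ
    have hctble : Set.Countable {v : ℝ | 0 < μ (π ⁻¹' {v})} := by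
      refine Measure.countable_meas_pos_of_disjoint_iUnion₀
        (As := fun v : ℝ => π ⁻¹' {v})
        (fun v => ((measurableSet_singleton v).preimage hπ).nullMeasurableSet) ?_
      intro i j hij
      refine Disjoint.aedisjoint (Set.disjoint_left.2 fun p hi hj => hij ?_)
      rw [Set.mem_preimage, Set.mem_singleton_iff] at hi hj
      rw [← hi, ← hj]
    rw [ae_iff]
    refine measure_mono_null (fun v hv => ?_) (hctble.measure_zero volume)
    exact pos_iff_ne_zero.mpr hv
  have hcnt1 : ∀ᵐ v : ℝ ∂volume, μ {p : ℝ × ℝ | p.1 = v} = 0 := by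
    simpa [Set.preimage, Set.mem_singleton_iff] using hcnt Prod.fst measurable_fst
  have hcnt2 : ∀ᵐ v : ℝ ∂volume, μ {p : ℝ × ℝ | p.2 = v} = 0 := by
    simpa [Set.preimage, Set.mem_singleton_iff] using hcnt Prod.snd measurable_snd
  -- a.e. integrability of the sections v ↦ (p ↦ α v p.2)
  have mαq : Measurable fun q : ℝ × (ℝ × ℝ) => ENNReal.ofReal |α q.1 q.2.2| :=
    ((hα_meas.comp (measurable_fst.prodMk measurable_snd.snd)).abs).ennreal_ofReal
  have hswapl : (∫⁻ v in Set.Icc (0 : ℝ) Tb, ∫⁻ p, ENNReal.ofReal |α v p.2| ∂μ) < ⊤ := by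
    have hunc : Measurable (Function.uncurry fun (p : ℝ × ℝ) (v : ℝ) =>
        ENNReal.ofReal |α v p.2|) := hαpv.abs.ennreal_ofReal
    have e := lintegral_lintegral_swap (μ := μ)
      (ν := volume.restrict (Set.Icc (0 : ℝ) Tb)) hunc.aemeasurable
    rw [← e]
    exact hα_int'
  have hfinv : ∀ᵐ v ∂(volume.restrict (Set.Ioc (0 : ℝ) t)),
      (∫⁻ p, ENNReal.ofReal |α v p.2| ∂μ) < ⊤ := by
    refine ae_restrict_of_ae_restrict_of_subset hsubIoc ?_
    exact ae_lt_top (Measurable.lintegral_prod_right mαq) hswapl.ne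
  have hαv : ∀ᵐ v ∂(volume.restrict (Set.Ioc (0 : ℝ) t)),
      Integrable (fun p : ℝ × ℝ => α v p.2) μ := by
    filter_upwards [hfinv] with v hv
    refine ⟨(hα_meas.comp (measurable_const.prodMk measurable_snd)).aestronglyMeasurable, ?_⟩
    rw [hasFiniteIntegral_iff_norm]
    simpa [Real.norm_eq_abs] using hv
  have hper : ∀ᵐ v ∂(volume.restrict (Set.Ioc (0 : ℝ) t)),
      (∫ p in B, F p v ∂μ) = ∫ p in Set.Icc 0 v ×ˢ Set.Ioc v T, α v p.2 ∂μ := by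
    filter_upwards [hαv, ae_restrict_of_ae hcnt1, ae_restrict_of_ae hcnt2,
      ae_restrict_mem measurableSet_Ioc] with v hint h1 h2 hv
    set D : Set (ℝ × ℝ) := Set.Ico 0 v ×ˢ Set.Icc 0 T with hDdef
    set E : Set (ℝ × ℝ) := Set.Icc 0 v ×ˢ Set.Ioc v T with hEdef
    have hDm : MeasurableSet D := measurableSet_Ico.prod measurableSet_Icc
    have hEm : MeasurableSet E := measurableSet_Icc.prod measurableSet_Ioc
    have e1 : (fun p : ℝ × ℝ => F p v)
        = Set.indicator {p : ℝ × ℝ | p.1 < v} fun p => α v p.2 := by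
      funext p
      simp only [hFdef, Set.indicator_apply, Set.mem_setOf_eq]
    have e2 : B ∩ {p : ℝ × ℝ | p.1 < v} = D := by
      ext p
      simp only [hBdef, hDdef, Set.mem_inter_iff, Set.mem_prod, Set.mem_Icc, Set.mem_Ico,
        Set.mem_setOf_eq]
      constructor
      · rintro ⟨⟨⟨h01, _⟩, hT⟩, hltv⟩
        exact ⟨⟨h01, hltv⟩, hT⟩
      · rintro ⟨⟨h01, hltv⟩, hT⟩
        exact ⟨⟨⟨h01, hltv.le.trans hv.2⟩, hT⟩, hltv⟩
    have eD : (∫ p in B, F p v ∂μ) = ∫ p in D, α v p.2 ∂μ := by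
      rw [e1, setIntegral_indicator (measurableSet_lt measurable_fst measurable_const), e2]
    have hDE0 : (∫ p in D \ E, α v p.2 ∂μ) = 0 := by
      have hne : ∀ᵐ p ∂μ, p.2 ≠ v := by
        rw [ae_iff]
        simpa using h2
      refine integral_eq_zero_of_ae ?_
      filter_upwards [ae_restrict_mem (hDm.diff hEm), ae_restrict_of_ae hne] with p hp hpne
      have hp2v : p.2 ≤ v := by
        by_contra hcon
        push_neg at hcon
        exact hp.2 ⟨⟨hp.1.1.1, hp.1.1.2.le⟩, hcon, hp.1.2.2⟩
      exact hα_zero v p.2 (lt_of_le_of_ne hp2v hpne)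
    have hED0 : (∫ p in E \ D, α v p.2 ∂μ) = 0 := by
      have hnull : μ (E \ D) = 0 := by
        refine measure_mono_null (fun p hp => ?_) h1
        have h0 : (0 : ℝ) ≤ p.1 := hp.1.1.1
        have hltv : ¬ p.1 < v := fun hcon =>
          hp.2 ⟨⟨h0, hcon⟩, le_of_lt (hv.1.trans hp.1.2.1), hp.1.2.2⟩
        exact le_antisymm hp.1.1.2 (not_lt.1 hltv)
      rw [Measure.restrict_eq_zero.mpr hnull]
      exact integral_zero_measure _
    have hsplitD : (∫ p in D, α v p.2 ∂μ) = ∫ p in D ∩ E, α v p.2 ∂μ := by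
      conv_lhs => rw [← Set.inter_union_diff D E]
      rw [setIntegral_union ((disjoint_sdiff_self_right.mono_left Set.inter_subset_right))
        (hDm.diff hEm) hint.integrableOn hint.integrableOn, hDE0, add_zero]
    have hsplitE : (∫ p in E, α v p.2 ∂μ) = ∫ p in D ∩ E, α v p.2 ∂μ := by
      conv_lhs => rw [← Set.inter_union_diff E D]
      rw [setIntegral_union ((disjoint_sdiff_self_right.mono_left Set.inter_subset_right))
        (hEm.diff hDm) hint.integrableOn hint.integrableOn, hED0, add_zero, Set.inter_comm E D]
    rw [eD, hsplitD, ← hsplitE]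
  have eFub : (∫ p in B, h p ∂μ)
      = ∫ v in Set.Ioc (0 : ℝ) t, (∫ p in Set.Icc 0 v ×ˢ Set.Ioc v T, α v p.2 ∂μ) := by
    rw [hswap]
    exact integral_congr_ae hper
  simp only [intervalIntegral.integral_of_le ht]
  rw [eI1, eI3a, eI3b, eI4a, eI4b, eI4c, ← eFub, eBh]
  ring
end

section
/- Let (E, ℰ) and (F, ℱ) be measurable spaces, ν a finite measure on E, K a finite measure kernel from E to F (so that s ↦ K(s)(F) is measurable and bounded), and ε > 0. Define ν' := the measure with density s ↦ K(s)(F) + ε with respect to ν, and K'(s) := (K(s)(F) + ε)⁻¹ · K(s). Then K' is a measurable kernel from E to F with K'(s)(F) ≤ 1 for every s ∈ E, and the semidirect product measures agree: ν ⊗ K = ν' ⊗ K' as measures on E × F, i.e., for every measurable set S ⊆ E × F, ∫_E K(s)({u : (s,u) ∈ S}) dν(s) = ∫_E K'(s)({u : (s,u) ∈ S}) dν'(s). -/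
open MeasureTheory ProbabilityTheory

/-- normalization of a finite kernel. Given a finite measure `ν` on `E`, a
finite kernel `K` from `E` to `F` and `ε > 0`, setting `ν' := (K(·)(F) + ε) · ν` and
`K'(s) := (K(s)(F) + ε)⁻¹ • K(s)`, the kernel `K'` is a sub-probability kernel
(`K'(s)(F) ≤ 1`) and the semidirect products agree:
`∫ K(s)(S_s) dν(s) = ∫ K'(s)(S_s) dν'(s)` for every measurable `S ⊆ E × F`. -/
theorem stmt9 {E F : Type*} [MeasurableSpace E] [MeasurableSpace F]
    (ν : Measure E) [IsFiniteMeasure ν]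
    (K : Kernel E F) [IsFiniteKernel K] (ε : ℝ) (hε : 0 < ε) :
    ∃ K' : Kernel E F,
      (∀ s : E, K' s = (K s Set.univ + ENNReal.ofReal ε)⁻¹ • K s) ∧
      (∀ s : E, K' s Set.univ ≤ 1) ∧
      ∀ S : Set (E × F), MeasurableSet S →
        (∫⁻ s, K s (Prod.mk s ⁻¹' S) ∂ν)
          = ∫⁻ s, K' s (Prod.mk s ⁻¹' S)
              ∂(ν.withDensity fun s => K s Set.univ + ENNReal.ofReal ε) := by
  have hmeas : Measurable fun s => K s Set.univ + ENNReal.ofReal ε :=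
    (K.measurable_coe MeasurableSet.univ).add measurable_const
  have hne0 : ∀ s, K s Set.univ + ENNReal.ofReal ε ≠ 0 := fun s => by
    simp [ENNReal.ofReal_eq_zero, hε.not_ge]
  have hnetop : ∀ s, K s Set.univ + ENNReal.ofReal ε ≠ ⊤ := fun s =>
    ENNReal.add_ne_top.2 ⟨(measure_lt_top _ _).ne, ENNReal.ofReal_ne_top⟩
  set f : E → ENNReal := fun s => K s Set.univ + ENNReal.ofReal ε with hf
  have hmeasf : Measurable (Function.uncurry fun (s : E) (_ : F) => (f s)⁻¹) :=
    (hmeas.inv).comp measurable_fst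
  refine ⟨K.withDensity fun s _ => (f s)⁻¹, ?_, ?_, ?_⟩
  · intro s
    rw [Kernel.withDensity_apply _ hmeasf]
    exact MeasureTheory.withDensity_const _
  · intro s
    rw [Kernel.withDensity_apply _ hmeasf, MeasureTheory.withDensity_const,
      Measure.smul_apply, smul_eq_mul]
    calc (f s)⁻¹ * K s Set.univ ≤ (f s)⁻¹ * f s := by
          gcongr; exact le_add_right le_rfl
      _ = 1 := ENNReal.inv_mul_cancel (hne0 s) (hnetop s)
  · intro S hS
    have hKS : Measurable fun s => K s (Prod.mk s ⁻¹' S) :=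
      Kernel.measurable_kernel_prodMk_left hS
    have hK' : ∀ s, (K.withDensity fun s _ => (f s)⁻¹) s (Prod.mk s ⁻¹' S)
        = (f s)⁻¹ * K s (Prod.mk s ⁻¹' S) := fun s => by
      rw [Kernel.withDensity_apply _ hmeasf, MeasureTheory.withDensity_const,
        Measure.smul_apply, smul_eq_mul]
    simp_rw [hK']
    rw [show (fun s => (f s)⁻¹ * K s (Prod.mk s ⁻¹' S)) = (f⁻¹ * fun s => K s (Prod.mk s ⁻¹' S)) from rfl,
      lintegral_withDensity_eq_lintegral_mul _ hmeas ((hmeas.inv).mul hKS)]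
    refine lintegral_congr fun s => ?_
    simp only [Pi.mul_apply, Pi.inv_apply]
    rw [← mul_assoc, ENNReal.mul_inv_cancel (hne0 s) (hnetop s), one_mul]
end
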